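/- (Bernstein-type theorem without time-like points, assuming the Calabi–Cheng–Yau theorem and the line theorem) Let f : ℝ^n → ℝ be C^4 with A_f ≡ 0 (entire ZMC graph) and B_f ≥ 0 everywhere (no time-like points). Then the graph of f is a hyperplane in ℝ^{n+1}_1; i.e. f is an affine function. -/

import Mathlib

open scoped BigOperators
open RealInnerProductSpace

noncomputable def pd {n : ℕ} (f : EuclideanSpace ℝ (Fin n) → ℝ) (i : Fin n)
    (x : EuclideanSpace ℝ (Fin n)) : ℝ :=
  fderiv ℝ f x (EuclideanSpace.single i 1)

noncomputable def Bf {n : ℕ} (f : EuclideanSpace ℝ (Fin n) → ℝ)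
    (x : EuclideanSpace ℝ (Fin n)) : ℝ :=
  1 - ∑ i, (pd f i x) ^ 2

noncomputable def Af {n : ℕ} (f : EuclideanSpace ℝ (Fin n) → ℝ)
    (x : EuclideanSpace ℝ (Fin n)) : ℝ :=
  ∑ i, ∑ j, (Bf f x * (if i = j then (1 : ℝ) else 0) + pd f i x * pd f j x)
      * pd (pd f j) i x

section aux

variable {n : ℕ} (f : EuclideanSpace ℝ (Fin n) → ℝ)

lemma fderiv_eq_inner_gradient (x u : EuclideanSpace ℝ (Fin n)) :
    fderiv ℝ f x u = ⟪gradient f x, u⟫ := by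
  rw [gradient, ← InnerProductSpace.toDual_apply_apply]
  simp

lemma Bf_eq_one_sub_sq (x : EuclideanSpace ℝ (Fin n)) :
    Bf f x = 1 - ‖gradient f x‖ ^ 2 := by
  have h : ∀ i, pd f i x = gradient f x i := by
    intro i
    rw [pd, fderiv_eq_inner_gradient]
    rw [EuclideanSpace.inner_single_right]; simp
  rw [Bf]
  simp_rw [h]
  rw [← real_inner_self_eq_norm_sq]
  rw [PiLp.inner_apply]; simp [sq]

lemma contDiff_Bf (hf : ContDiff ℝ 4 f) : ContDiff ℝ 3 (Bf f) := by
  have h : ∀ i, ContDiff ℝ 3 (pd f i) :=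
    fun i => (hf.fderiv_right (by norm_num)).clm_apply contDiff_const
  exact contDiff_const.sub (ContDiff.sum fun i _ => (h i).pow 2)

lemma gradient_Bf_zero (hB : ∀ x, Bf f x ≥ 0) (y : EuclideanSpace ℝ (Fin n))
    (hy : Bf f y = 0) : gradient (Bf f) y = 0 := by
  have hmin : IsLocalMin (Bf f) y :=
    Filter.Eventually.of_forall (fun x => by rw [hy]; exact hB x)
  rw [gradient, hmin.fderiv_eq_zero, map_zero]

lemma gradient_norm_one (y : EuclideanSpace ℝ (Fin n)) (hy : Bf f y = 0) :
    ‖gradient f y‖ = 1 := by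
  rw [Bf_eq_one_sub_sq] at hy
  have h0 : (0:ℝ) ≤ ‖gradient f y‖ := norm_nonneg _
  nlinarith

lemma lipschitz_of_Bf_nonneg (hf : ContDiff ℝ 4 f) (hB : ∀ x, Bf f x ≥ 0) :
    LipschitzWith 1 f := by
  apply lipschitzWith_of_nnnorm_fderiv_le (hf.differentiable (by norm_num))
  intro x
  have h1 : ‖fderiv ℝ f x‖ = ‖gradient f x‖ := by
    have : fderiv ℝ f x
        = InnerProductSpace.toDual ℝ (EuclideanSpace ℝ (Fin n)) (gradient f x) :=
      (LinearIsometryEquiv.apply_symm_apply _ _).symm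
    rw [this, LinearIsometryEquiv.norm_map]
  have h2 := hB x
  rw [Bf_eq_one_sub_sq] at h2
  have h0 : (0:ℝ) ≤ ‖gradient f x‖ := norm_nonneg _
  have : ‖fderiv ℝ f x‖ ≤ 1 := by rw [h1]; nlinarith
  exact_mod_cast this

end aux

theorem stmt11 {n : ℕ} (f : EuclideanSpace ℝ (Fin n) → ℝ) (hf : ContDiff ℝ 4 f)
    (hA : ∀ x, Af f x = 0) (hB : ∀ x, Bf f x ≥ 0)
    (CCY : ∀ g : EuclideanSpace ℝ (Fin n) → ℝ, ContDiff ℝ 4 g →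
      (∀ x, Af g x = 0) → (∀ x, Bf g x > 0) →
      ∃ (a : EuclideanSpace ℝ (Fin n)) (b : ℝ), ∀ x, g x = ⟪a, x⟫ + b)
    (lineThm : ∀ g : EuclideanSpace ℝ (Fin n) → ℝ, ContDiff ℝ 4 g →
      (∀ x, Af g x = 0) →
      ∀ x, Bf g x = 0 → gradient (Bf g) x = 0 →
        ∃ ε > 0, ∀ t : ℝ, |t| < ε →
          Bf g (x + t • gradient g x) = 0 ∧
          gradient (Bf g) (x + t • gradient g x) = 0 ∧
          g (x + t • gradient g x) = g x + t) :
    ∃ (a : EuclideanSpace ℝ (Fin n)) (b : ℝ), ∀ x, f x = ⟪a, x⟫ + b := by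
  by_cases hpos : ∀ x, Bf f x > 0
  · exact CCY f hf hA hpos
  -- there is a degenerate point x₀
  push_neg at hpos
  obtain ⟨x₀, hx₀⟩ := hpos
  have hBx₀ : Bf f x₀ = 0 := le_antisymm hx₀ (hB x₀)
  set v : EuclideanSpace ℝ (Fin n) := gradient f x₀ with hv_def
  have hv : ‖v‖ = 1 := gradient_norm_one f x₀ hBx₀
  have hlip : LipschitzWith 1 f := lipschitz_of_Bf_nonneg f hf hB
  have hdist : ∀ x y : EuclideanSpace ℝ (Fin n), |f x - f y| ≤ ‖x - y‖ := by
    intro x y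
    have := hlip.dist_le_mul x y
    rwa [Real.dist_eq, dist_eq_norm, NNReal.coe_one, one_mul] at this
  -- the set of parameters along the light-like line
  set S : Set ℝ := {t | Bf f (x₀ + t • v) = 0 ∧ f (x₀ + t • v) = f x₀ + t} with hS_def
  have hcont_line : Continuous fun t : ℝ => x₀ + t • v :=
    continuous_const.add (continuous_id.smul continuous_const)
  have h0S : (0:ℝ) ∈ S := by
    constructor <;> simp [hBx₀]
  have hSclosed : IsClosed S := by
    have h1 : IsClosed {t : ℝ | Bf f (x₀ + t • v) = 0} :=
      isClosed_eq ((contDiff_Bf f hf).continuous.comp hcont_line) continuous_const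
    have h2 : IsClosed {t : ℝ | f (x₀ + t • v) = f x₀ + t} :=
      isClosed_eq (hf.continuous.comp hcont_line)
        (continuous_const.add continuous_id)
    exact h1.inter h2
  have hSopen : IsOpen S := by
    rw [Metric.isOpen_iff]
    intro t ht
    obtain ⟨hBy, hfy⟩ := ht
    set y : EuclideanSpace ℝ (Fin n) := x₀ + t • v with hy_def
    have hgy_norm : ‖gradient f y‖ = 1 := gradient_norm_one f y hBy
    -- the gradient at y equals v
    have hgy : gradient f y = v := by
      have hinner : ⟪gradient f y, v⟫ = 1 := by
        rcases eq_or_ne t 0 with ht0 | ht0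
        · have hyx : y = x₀ := by rw [hy_def, ht0, zero_smul, add_zero]
          rw [hyx, ← hv_def, real_inner_self_eq_norm_sq, hv]; norm_num
        · -- derivative of s ↦ f (x₀ + s • v) at t
          set g : ℝ → ℝ := fun s => f (x₀ + s • v) with hg_def
          have hgderiv : HasDerivAt g (⟪gradient f y, v⟫) t := by
            have hline : HasDerivAt (fun s : ℝ => x₀ + s • v) v t := by
              have := ((hasDerivAt_id t).smul_const v).const_add x₀
              simpa using this
            have hfd : HasFDerivAt f (fderiv ℝ f y) y :=
              (hf.differentiable (by norm_num) y).hasFDerivAt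
            have := hfd.comp_hasDerivAt t hline
            rwa [fderiv_eq_inner_gradient] at this
          -- g s = f x₀ + s on the interval between 0 and t
          have hval : ∀ s ∈ Set.uIcc 0 t, g s = f x₀ + s := by
            intro s hs
            have h1 : |g s - f x₀| ≤ |s| := by
              have := hdist (x₀ + s • v) x₀
              simpa [g, norm_smul, hv] using this
            have h2 : |g t - g s| ≤ |t - s| := by
              have h := hdist (x₀ + t • v) (x₀ + s • v)
              have heq : (x₀ + t • v) - (x₀ + s • v) = (t - s) • v := by
                rw [sub_smul]; abel
              rw [heq, norm_smul, hv, mul_one] at h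
              exact h
            have hgt : g t = f x₀ + t := hfy
            have h1' := abs_le.mp h1
            have h2' := abs_le.mp h2
            rcases le_or_gt 0 t with htpos | htneg
            · have hs' : s ∈ Set.Icc 0 t := by rwa [Set.uIcc_of_le htpos] at hs
              obtain ⟨hs0, hst⟩ := hs'
              rw [abs_of_nonneg hs0] at h1'
              rw [abs_of_nonneg (by linarith : (0:ℝ) ≤ t - s)] at h2'
              linarith [h1'.1, h1'.2, h2'.1, h2'.2]
            · have hs' : s ∈ Set.Icc t 0 := by rwa [Set.uIcc_of_ge htneg.le] at hs
              obtain ⟨hst, hs0⟩ := hs'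
              rw [abs_of_nonpos hs0] at h1'
              rw [abs_of_nonpos (by linarith : t - s ≤ 0)] at h2'
              linarith [h1'.1, h1'.2, h2'.1, h2'.2]
          -- uniqueness of derivative on the interval forces the inner product to be 1
          have huniq : UniqueDiffWithinAt ℝ (Set.uIcc 0 t) t := by
            rcases ht0.lt_or_gt with h | h
            · rw [Set.uIcc_of_ge h.le]
              exact uniqueDiffOn_Icc h t (Set.mem_Icc.mpr ⟨le_refl t, h.le⟩)
            · rw [Set.uIcc_of_le h.le]
              exact uniqueDiffOn_Icc h t (Set.mem_Icc.mpr ⟨h.le, le_refl t⟩)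
          have hd1 : HasDerivWithinAt g (⟪gradient f y, v⟫) (Set.uIcc 0 t) t :=
            hgderiv.hasDerivWithinAt
          have hd2 : HasDerivWithinAt g 1 (Set.uIcc 0 t) t := by
            have hconst : HasDerivWithinAt (fun s : ℝ => f x₀ + s) 1
                (Set.uIcc 0 t) t :=
              ((hasDerivAt_id t).const_add (f x₀)).hasDerivWithinAt
            exact hconst.congr hval (hval t Set.right_mem_uIcc)
          have e1 := hd1.derivWithin huniq
          have e2 := hd2.derivWithin huniq
          rw [e1] at e2
          exact e2
      have hinner' : ⟪gradient f y, v⟫ = ‖gradient f y‖ * ‖v‖ := by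
        rw [hgy_norm, hv, one_mul]; exact hinner
      have h2 := inner_eq_norm_mul_iff_real.mp hinner'
      rw [hgy_norm, hv, one_smul, one_smul] at h2
      exact h2
    obtain ⟨ε, hε, hline⟩ := lineThm f hf hA y hBy (gradient_Bf_zero f hB y hBy)
    refine ⟨ε, hε, fun s hs => ?_⟩
    rw [Metric.mem_ball, Real.dist_eq] at hs
    obtain ⟨hB', _, hf'⟩ := hline (s - t) hs
    rw [hgy] at hB' hf'
    have hpt : y + (s - t) • v = x₀ + s • v := by
      rw [hy_def, sub_smul]; abel
    rw [hpt] at hB' hf'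
    rw [hfy] at hf'
    exact ⟨hB', by rw [hf']; ring⟩
  have hSuniv : S = Set.univ := IsClopen.eq_univ ⟨hSclosed, hSopen⟩ ⟨0, h0S⟩
  -- Lipschitz squeeze against the full line
  refine ⟨v, f x₀ - ⟪v, x₀⟫, fun y => ?_⟩
  set w : EuclideanSpace ℝ (Fin n) := y - x₀ with hw_def
  set d : ℝ := f y - f x₀ with hd_def
  set c : ℝ := ⟪w, v⟫ with hc_def
  have key : ∀ t : ℝ, 2 * t * (c - d) ≤ ‖w‖ ^ 2 - d ^ 2 := by
    intro t
    have htS : t ∈ S := hSuniv ▸ Set.mem_univ t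
    obtain ⟨_, hft⟩ := htS
    have h1 : |f y - (f x₀ + t)| ≤ ‖w - t • v‖ := by
      have := hdist y (x₀ + t • v)
      have heq : y - (x₀ + t • v) = w - t • v := by rw [hw_def]; abel
      rwa [heq, hft] at this
    have hsq : (d - t) ^ 2 ≤ ‖w - t • v‖ ^ 2 := by
      have habs : |d - t| = |f y - (f x₀ + t)| := by rw [hd_def]; ring_nf
      calc (d - t) ^ 2 = |d - t| ^ 2 := (sq_abs _).symm
        _ ≤ ‖w - t • v‖ ^ 2 := by
            rw [habs]
            exact pow_le_pow_left₀ (abs_nonneg _) h1 2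
    have hnorm : ‖w - t • v‖ ^ 2 = ‖w‖ ^ 2 - 2 * t * c + t ^ 2 := by
      rw [norm_sub_sq_real, real_inner_smul_right, norm_smul, hc_def]
      rw [mul_pow, Real.norm_eq_abs, sq_abs, hv]
      ring
    nlinarith [hsq, hnorm]
  have hcd : c = d := by
    by_contra hne
    have hne' : c - d ≠ 0 := sub_ne_zero.mpr hne
    set M : ℝ := ‖w‖ ^ 2 - d ^ 2 with hM_def
    have := key ((M + 1) / (2 * (c - d)))
    rw [show 2 * ((M + 1) / (2 * (c - d))) * (c - d) = M + 1 by
      field_simp] at this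
    linarith
  rw [hc_def, hd_def] at hcd
  have hfin : ⟪v, y⟫ - ⟪v, x₀⟫ = f y - f x₀ := by
    have h := hcd
    rw [hw_def, real_inner_comm, inner_sub_right] at h
    linarith [h]
  linarith [hfin]
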